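/- Let p be a prime. Let (X,R) be a presentation of a group G with X finite and every element of R non-trivial; write F = F(X) for the free group on X and π : F → G for the natural projection, so G = F/⟨⟨R⟩⟩. Let H be a normal subgroup of G of p-power index and F_H = π^{−1}(H). Then there exists a subset R_H ⊆ F_H such that the kernel of the induced surjection F_H → H equals the normal closure of R_H in F_H, and R_H can be written as a union R_H = ⋃_{r∈R} S_r, where each S_r is a set of F-conjugates of r of cardinality [G:H]/p^{e_p(r,F) − e_p(r,F_H)}. -/

import Mathlib

/-- `epIn p S w`: the largest natural number `e` such that `w` has a `p^e`-th root
belonging to the subgroup `S` of the free group.  For `S = ⊤` this is `e_p(w, F)`. -/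
noncomputable def epIn {X : Type*} (p : ℕ) (S : Subgroup (FreeGroup X)) (w : FreeGroup X) : ℕ :=
  sSup {e : ℕ | ∃ v ∈ S, v ^ p ^ e = w}

open Subgroup

lemma aux_L1 {S : Type*} {a b : S} (hab : a ≠ b) :
    ¬ Commute (FreeGroup.of a) (FreeGroup.of b) := by
  classical
  intro hcomm
  let f : S → Equiv.Perm (Fin 3) := fun s => if s = a then Equiv.swap 0 1 else Equiv.swap 1 2
  have h2 := congrArg (FreeGroup.lift f) hcomm.eq
  simp only [map_mul, FreeGroup.lift_apply_of] at h2
  simp only [f, if_pos rfl, if_neg (Ne.symm hab)] at h2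
  revert h2; decide

noncomputable def expSum {S : Type*} (a : S) :
    FreeGroup S →* Multiplicative ℤ := by
  classical exact FreeGroup.lift (fun s => Multiplicative.ofAdd (if s = a then 1 else 0))

lemma expSum_of {S : Type*} (a : S) :
    expSum a (FreeGroup.of a) = Multiplicative.ofAdd 1 := by
  classical simp [expSum]

lemma expSum_of_ne {S : Type*} {a b : S} (h : b ≠ a) :
    expSum a (FreeGroup.of b) = 1 := by
  classical simp [expSum, if_neg h]

lemma expSum_zpow_of {S : Type*} (a : S) (n : ℤ) :
    (expSum a ((FreeGroup.of a) ^ n)).toAdd = n := by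
  rw [map_zpow, expSum_of]; simp

lemma aux_L3 {S : Type*} [Unique S] (x : FreeGroup S) :
    ∃ n : ℤ, x = FreeGroup.of (default : S) ^ n := by
  induction x using FreeGroup.induction_on with
  | C1 => exact ⟨0, by simp⟩
  | of s => exact ⟨1, by rw [zpow_one]; exact congrArg FreeGroup.of (Unique.eq_default s)⟩
  | inv_of s ih => obtain ⟨n, hn⟩ := ih; exact ⟨-n, by rw [hn, ← zpow_neg]⟩
  | mul x y ihx ihy =>
      obtain ⟨n, hn⟩ := ihx; obtain ⟨m, hm⟩ := ihy
      exact ⟨n + m, by rw [hn, hm, zpow_add]⟩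

lemma aux_L4 {S : Type*} [IsEmpty S] (x : FreeGroup S) : x = 1 := by
  induction x using FreeGroup.induction_on with
  | C1 => rfl
  | of s => exact isEmptyElim s
  | inv_of s ih => rw [ih]; simp
  | mul x y ihx ihy => rw [ihx, ihy, one_mul]

open Subgroup in
private lemma aux_ending {X : Type*} (K : Subgroup (FreeGroup X))
    (hss : Subsingleton (IsFreeGroup.Generators K)) :
    ∃ t ∈ K, K ≤ Subgroup.zpowers t ∧
      ((∀ m n : ℤ, t ^ m = t ^ n → m = n) ∨ K = ⊥) := by
  set φ := IsFreeGroup.toFreeGroup (G := K) with hφ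
  rcases isEmpty_or_nonempty (IsFreeGroup.Generators K) with he | hne
  · refine ⟨1, K.one_mem, ?_, Or.inr ?_⟩
    · intro k hk
      have h1 : φ ⟨k, hk⟩ = φ 1 := by rw [map_one]; exact aux_L4 _
      have := φ.injective h1
      simp only [Subtype.ext_iff] at this
      rw [this]; exact Subgroup.one_mem _
    · ext k
      simp only [Subgroup.mem_bot]
      constructor
      · intro hk
        have h1 : φ ⟨k, hk⟩ = φ 1 := by rw [map_one]; exact aux_L4 _
        have := φ.injective h1
        simpa [Subtype.ext_iff] using this
      · rintro rfl; exact K.one_mem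
  · obtain ⟨a0⟩ := hne
    haveI : Unique (IsFreeGroup.Generators K) := ⟨⟨a0⟩, fun x => Subsingleton.elim x a0⟩
    set tK : K := φ.symm (FreeGroup.of default) with htK
    refine ⟨(tK : FreeGroup X), tK.2, ?_, Or.inl ?_⟩
    · intro k hk
      obtain ⟨n, hn⟩ := aux_L3 (φ ⟨k, hk⟩)
      have : (⟨k, hk⟩ : K) = tK ^ n := by
        apply φ.injective
        rw [map_zpow, htK, MulEquiv.apply_symm_apply, ← hn]
      refine Subgroup.mem_zpowers_iff.2 ⟨n, ?_⟩
      have h3 := congrArg (Subtype.val) this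
      simpa using h3.symm
    · intro m n hmn
      have h1 : tK ^ m = tK ^ n := by
        apply Subtype.coe_injective
        push_cast
        exact hmn
      have h2 : (FreeGroup.of (default : IsFreeGroup.Generators K)) ^ m
          = (FreeGroup.of (default : IsFreeGroup.Generators K)) ^ n := by
        have := congrArg φ h1
        rwa [map_zpow, map_zpow, htK, MulEquiv.apply_symm_apply] at this
      calc m = (expSum (default : IsFreeGroup.Generators K)
              ((FreeGroup.of (default : IsFreeGroup.Generators K)) ^ m)).toAdd :=
            (expSum_zpow_of _ m).symm
        _ = (expSum (default : IsFreeGroup.Generators K)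
              ((FreeGroup.of (default : IsFreeGroup.Generators K)) ^ n)).toAdd := by rw [h2]
        _ = n := expSum_zpow_of _ n

private lemma aux_ab {X : Type*} (K : Subgroup (FreeGroup X))
    (hcomm : ∀ x ∈ K, ∀ y ∈ K, x * y = y * x) :
    ∃ t ∈ K, K ≤ Subgroup.zpowers t ∧
      ((∀ m n : ℤ, t ^ m = t ^ n → m = n) ∨ K = ⊥) := by
  apply aux_ending
  by_contra hns
  rw [not_subsingleton_iff_nontrivial] at hns
  obtain ⟨a, b, hab⟩ := hns
  set φ := IsFreeGroup.toFreeGroup (G := K)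
  set x : K := φ.symm (FreeGroup.of a)
  set y : K := φ.symm (FreeGroup.of b)
  have hxy : x * y = y * x := Subtype.ext (hcomm _ x.2 _ y.2)
  have : FreeGroup.of a * FreeGroup.of b = FreeGroup.of b * FreeGroup.of a := by
    have := congrArg φ hxy
    simpa [x, y, map_mul] using this
  exact aux_L1 hab this

private lemma aux_pow_of {S : Type*} (g : S) (c : FreeGroup S)
    (h : Commute c (FreeGroup.of g)) : ∃ m : ℤ, c = FreeGroup.of g ^ m := by
  set K := Subgroup.closure {c, FreeGroup.of g} with hK
  have hcK : c ∈ K := Subgroup.subset_closure (by simp)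
  have hgK : FreeGroup.of g ∈ K := Subgroup.subset_closure (by simp)
  have hcomm : ∀ x ∈ K, ∀ y ∈ K, x * y = y * x := by
    have base : ∀ y ∈ K, Commute c y ∧ Commute (FreeGroup.of g) y := by
      intro y hy
      induction hy using Subgroup.closure_induction with
      | mem z hz =>
        rcases hz with rfl | rfl
        · exact ⟨Commute.refl _, h.symm⟩
        · exact ⟨h, Commute.refl _⟩
      | one => exact ⟨Commute.one_right _, Commute.one_right _⟩
      | mul u v hu hv ihu ihv => exact ⟨ihu.1.mul_right ihv.1, ihu.2.mul_right ihv.2⟩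
      | inv u hu ihu => exact ⟨ihu.1.inv_right, ihu.2.inv_right⟩
    intro x hx y hy
    induction hx using Subgroup.closure_induction with
    | mem z hz =>
      rcases hz with rfl | rfl
      · exact (base y hy).1.eq
      · exact (base y hy).2.eq
    | one => simp
    | mul u v hu hv ihu ihv =>
      have h1 : Commute u y := ihu
      have h2 : Commute v y := ihv
      exact (h1.mul_left h2).eq
    | inv u hu ihu =>
      have h1 : Commute u y := ihu
      exact h1.inv_left.eq
  obtain ⟨t, htK, hle, _⟩ := aux_ab K hcomm
  obtain ⟨j, hj⟩ := Subgroup.mem_zpowers_iff.1 (hle hgK)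
  obtain ⟨m, hm⟩ := Subgroup.mem_zpowers_iff.1 (hle hcK)
  -- j is a unit
  have h1 : j * (expSum g t).toAdd = 1 := by
    have h0 := congrArg (fun x => (expSum g x).toAdd) hj
    simp only [map_zpow, toAdd_zpow] at h0
    rw [expSum_of] at h0
    simpa [smul_eq_mul] using h0
  have hjj : j = 1 ∨ j = -1 := Int.isUnit_iff.1 (IsUnit.of_mul_eq_one _ h1)
  rcases hjj with rfl | rfl
  · refine ⟨m, ?_⟩
    rw [← hm]
    congr 1
    rw [zpow_one] at hj
    exact hj
  · refine ⟨-m, ?_⟩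
    rw [← hm]
    have ht : t = (FreeGroup.of g)⁻¹ := by
      rw [← hj]; simp
    rw [ht]
    simp [inv_zpow]

private lemma aux_L5 {S : Type*} {a b : S} (hab : a ≠ b) {c : FreeGroup S}
    (ha : Commute c (FreeGroup.of a)) (hb : Commute c (FreeGroup.of b)) : c = 1 := by
  obtain ⟨m, hm⟩ := aux_pow_of a c ha
  obtain ⟨n, hn⟩ := aux_pow_of b c hb
  have h1 : (expSum a c).toAdd = m := by rw [hm]; exact expSum_zpow_of a m
  have h2 : (expSum a c).toAdd = 0 := by
    rw [hn, map_zpow, expSum_of_ne hab.symm]; simp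
  rw [hm, h1.symm.trans h2]; simp

/-- The centralizer-style lemma: a subgroup of a free group containing a nontrivial
central element is infinite cyclic. -/
private lemma aux_cyclic {X : Type*} (K : Subgroup (FreeGroup X)) {c : FreeGroup X}
    (hc : c ∈ K) (hc1 : c ≠ 1) (hcen : ∀ y ∈ K, c * y = y * c) :
    ∃ t ∈ K, K ≤ Subgroup.zpowers t ∧ (∀ m n : ℤ, t ^ m = t ^ n → m = n) := by
  have hss : Subsingleton (IsFreeGroup.Generators K) := by
    by_contra hns
    rw [not_subsingleton_iff_nontrivial] at hns
    obtain ⟨a, b, hab⟩ := hns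
    set φ := IsFreeGroup.toFreeGroup (G := K)
    set c' : FreeGroup (IsFreeGroup.Generators K) := φ ⟨c, hc⟩ with hc'
    have hcom : ∀ s : IsFreeGroup.Generators K, Commute c' (FreeGroup.of s) := by
      intro s
      set x : K := φ.symm (FreeGroup.of s)
      have hx : (⟨c, hc⟩ : K) * x = x * ⟨c, hc⟩ := Subtype.ext (hcen _ x.2)
      have := congrArg φ hx
      simp only [map_mul] at this
      have h' : c' * FreeGroup.of s = FreeGroup.of s * c' := by
        simpa [c', x, MulEquiv.apply_symm_apply] using this
      exact h'
    have : c' = 1 := aux_L5 hab (hcom a) (hcom b)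
    apply hc1
    have := φ.injective (this.trans (map_one φ).symm)
    simpa [Subtype.ext_iff] using this
  obtain ⟨t, htK, hle, hinj | hbot⟩ := aux_ending K hss
  · exact ⟨t, htK, hle, hinj⟩
  · exact absurd (by simpa [hbot] using hc : c ∈ (⊥ : Subgroup (FreeGroup X))) (by simpa)

/-- Torsion-freeness / unique-roots workhorse: the centralizer of a nontrivial element. -/
private lemma aux_centralizer {X : Type*} {r : FreeGroup X} (hr : r ≠ 1) :
    ∃ t : FreeGroup X, (∀ y : FreeGroup X, y * r = r * y → y ∈ Subgroup.zpowers t) ∧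
      (∀ m n : ℤ, t ^ m = t ^ n → m = n) ∧ ∃ mr : ℤ, mr ≠ 0 ∧ r = t ^ mr := by
  set K := Subgroup.centralizer {r} with hK
  have hrK : r ∈ K := by
    rw [hK, Subgroup.mem_centralizer_iff]
    rintro y ⟨rfl⟩; rfl
  have hcen : ∀ y ∈ K, r * y = y * r := by
    intro y hy
    have := Subgroup.mem_centralizer_iff.1 hy r rfl
    exact this
  obtain ⟨t, htK, hle, hinj⟩ := aux_cyclic K hrK hr hcen
  refine ⟨t, ?_, hinj, ?_⟩
  · intro y hy
    apply hle
    rw [hK, Subgroup.mem_centralizer_iff]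
    rintro z ⟨rfl⟩
    exact hy.symm
  · obtain ⟨mr, hmr⟩ := Subgroup.mem_zpowers_iff.1 (hle hrK)
    refine ⟨mr, ?_, hmr.symm⟩
    rintro rfl
    rw [zpow_zero] at hmr
    exact hr hmr.symm

section test
variable {X : Type} (p : ℕ) (hp : p.Prime) {G : Type} [Group G] (π : FreeGroup X →* G)
  (H : Subgroup G) (hHnorm : H.Normal) (k : ℕ)

include hp hHnorm in
private lemma aux_key
    (hFHidx : (Subgroup.comap π H).index = p ^ k)
    (r : FreeGroup X) (hr : r ≠ 1) (hπr : π r = 1) :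
    ∃ Sr : Set ↥(Subgroup.comap π H),
      (∀ w ∈ Sr, ∃ f : FreeGroup X, (w : FreeGroup X) = f * r * f⁻¹) ∧
      (Nat.card Sr * p ^ (epIn p ⊤ r - epIn p (Subgroup.comap π H) r) = p ^ k) ∧
      (∀ w ∈ Sr, π (w : FreeGroup X) = 1) ∧
      (∀ f : FreeGroup X, ∃ g ∈ Subgroup.comap π H, ∃ w ∈ Sr,
        f * r * f⁻¹ = g * (w : FreeGroup X) * g⁻¹) := by
  set FH := Subgroup.comap π H with hFHdef
  haveI hFHn : FH.Normal := hHnorm.comap π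
  have hrFH : r ∈ FH := by simp only [hFHdef, Subgroup.mem_comap, hπr]; exact H.one_mem
  obtain ⟨z, hzcen, hzinj, m, hm0, hmz⟩ := aux_centralizer hr
  -- every p-power root of r is a power of z
  have hroot : ∀ (e : ℕ) (v : FreeGroup X), v ^ p ^ e = r →
      ∃ s : ℤ, v = z ^ s ∧ s * ((p ^ e : ℕ) : ℤ) = m := by
    intro e v hv
    have hvr : v * r = r * v := by rw [← hv]; exact ((Commute.refl v).pow_right _).eq
    obtain ⟨s, hs⟩ := Subgroup.mem_zpowers_iff.1 (hzcen v hvr)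
    refine ⟨s, hs.symm, hzinj _ _ ?_⟩
    calc z ^ (s * ((p ^ e : ℕ) : ℤ)) = (z ^ s) ^ ((p ^ e : ℕ) : ℤ) := by rw [zpow_mul]
      _ = (z ^ s) ^ (p ^ e : ℕ) := zpow_natCast _ _
      _ = r := by rw [hs, hv]
      _ = z ^ m := by rw [hmz]
  have hbdd : ∀ S : Subgroup (FreeGroup X), BddAbove {e : ℕ | ∃ v ∈ S, v ^ p ^ e = r} := by
    intro S
    refine ⟨m.natAbs, ?_⟩
    rintro e ⟨v, hvS, hv⟩
    obtain ⟨s, hsv, hs⟩ := hroot e v hv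
    have hs0 : s ≠ 0 := by rintro rfl; rw [zero_mul] at hs; exact hm0 hs.symm
    have hle : (p ^ e : ℕ) ≤ m.natAbs := by
      have h1 := congrArg Int.natAbs hs
      rw [Int.natAbs_mul, Int.natAbs_natCast] at h1
      have : 1 ≤ s.natAbs := Int.natAbs_pos.2 hs0
      calc (p ^ e : ℕ) = 1 * p ^ e := (one_mul _).symm
        _ ≤ s.natAbs * p ^ e := Nat.mul_le_mul_right _ this
        _ = m.natAbs := h1
    exact le_trans (Nat.le_of_lt (Nat.lt_pow_self (n := e) hp.one_lt)) hle
  have hne0 : ∀ S : Subgroup (FreeGroup X), r ∈ S →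
      (0 : ℕ) ∈ {e : ℕ | ∃ v ∈ S, v ^ p ^ e = r} := by
    intro S hS; exact ⟨r, hS, by simp⟩
  set e := epIn p ⊤ r with he_def
  set eH := epIn p FH r with heH_def
  have heE : e ∈ {e : ℕ | ∃ v ∈ (⊤ : Subgroup (FreeGroup X)), v ^ p ^ e = r} := by
    rw [he_def, epIn]; exact Nat.sSup_mem ⟨0, hne0 ⊤ trivial⟩ (hbdd ⊤)
  have heHE : eH ∈ {e : ℕ | ∃ v ∈ FH, v ^ p ^ e = r} := by
    rw [heH_def, epIn]; exact Nat.sSup_mem ⟨0, hne0 FH hrFH⟩ (hbdd FH)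
  obtain ⟨v, -, hv⟩ := heE
  obtain ⟨w, hwFH, hw⟩ := heHE
  have hemax : ∀ e' : ℕ, (∃ v' : FreeGroup X, v' ^ p ^ e' = r) → e' ≤ e := by
    rintro e' ⟨v', hv'⟩
    rw [he_def, epIn]
    exact le_csSup (hbdd ⊤) ⟨v', trivial, hv'⟩
  have heHmax : ∀ e' : ℕ, (∃ v' ∈ FH, v' ^ p ^ e' = r) → e' ≤ eH := by
    intro e' h
    rw [heH_def, epIn]
    exact le_csSup (hbdd FH) h
  have heHle : eH ≤ e := hemax eH ⟨w, hw⟩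
  obtain ⟨a, hav, ha⟩ := hroot e v hv
  obtain ⟨b, hbw, hb⟩ := hroot eH w hw
  have hpa : ¬ ((p : ℤ) ∣ a) := by
    rintro ⟨a', rfl⟩
    have hstep : (z ^ a') ^ p ^ (e + 1) = r := by
      rw [← zpow_natCast, ← zpow_mul, hmz]
      congr 1
      rw [← ha]
      push_cast [pow_succ]
      ring
    have := hemax (e + 1) ⟨_, hstep⟩
    omega
  have hb_eq : b = a * (p : ℤ) ^ (e - eH) := by
    have h1 : b * (p : ℤ) ^ eH = a * (p : ℤ) ^ (e - eH) * (p : ℤ) ^ eH := by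
      rw [mul_assoc, ← pow_add]
      have h2 : e - eH + eH = e := by omega
      rw [h2]
      have hbz : b * (p : ℤ) ^ eH = m := by rw [← hb]; push_cast; ring
      have haz : a * (p : ℤ) ^ e = m := by rw [← ha]; push_cast; ring
      rw [hbz, haz]
    exact mul_right_cancel₀ (pow_ne_zero _ (by exact_mod_cast hp.ne_zero)) h1
  have hvFH : v ^ (p ^ (e - eH) : ℕ) ∈ FH := by
    have hvw : v ^ (p ^ (e - eH) : ℕ) = w := by
      rw [hav, hbw, ← zpow_natCast, ← zpow_mul, hb_eq]
      congr 1
    rw [hvw]; exact hwFH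
  haveI : FH.FiniteIndex := ⟨by rw [hFHidx]; exact pow_ne_zero _ hp.ne_zero⟩
  set q := QuotientGroup.mk' FH with hq
  have hcardQ : Nat.card (FreeGroup X ⧸ FH) = p ^ k := by
    rw [← Subgroup.index_eq_card, hFHidx]
  have hordv : orderOf (q v) = p ^ (e - eH) := by
    have hdvd : orderOf (q v) ∣ p ^ (e - eH) := by
      apply orderOf_dvd_of_pow_eq_one
      rw [← map_pow]
      exact (QuotientGroup.eq_one_iff _).2 hvFH
    obtain ⟨t, htle, hto⟩ := (Nat.dvd_prime_pow hp).1 hdvd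
    have hvt : v ^ (p ^ t : ℕ) ∈ FH := by
      apply (QuotientGroup.eq_one_iff _).1
      show q (v ^ (p ^ t : ℕ)) = 1
      rw [map_pow, ← hto, pow_orderOf_eq_one]
    have hle2 : e - t ≤ eH := by
      apply heHmax
      refine ⟨v ^ (p ^ t : ℕ), hvt, ?_⟩
      rw [← pow_mul, ← pow_add]
      have : t + (e - t) = e := by omega
      rw [this, hv]
    rw [hto]
    congr 1
    omega
  set M := Subgroup.comap q (Subgroup.zpowers (q v)) with hM
  have hMidx : M.index * p ^ (e - eH) = p ^ k := by
    rw [hM, Subgroup.index_comap_of_surjective _ (QuotientGroup.mk'_surjective FH),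
      ← hordv, ← Nat.card_zpowers, Subgroup.index_mul_card, hcardQ]
  have hzM : z ∈ M := by
    show q z ∈ Subgroup.zpowers (q v)
    have hqv : q v = q z ^ a := by rw [hav, map_zpow]
    have hcop : IsCoprime ((p : ℤ) ^ k) a :=
      (((Nat.prime_iff_prime_int.mp hp).coprime_iff_not_dvd).2 hpa).pow_left
    obtain ⟨u, w', huw⟩ := hcop
    have hzk : q z ^ ((p : ℤ) ^ k) = 1 := by
      have hcast : ((p : ℤ)) ^ k = ((p ^ k : ℕ) : ℤ) := by push_cast; ring
      rw [hcast, zpow_natCast, ← hcardQ, pow_card_eq_one']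
    refine Subgroup.mem_zpowers_iff.2 ⟨w', ?_⟩
    rw [hqv, ← zpow_mul]
    calc q z ^ (a * w') = q z ^ (1 - (p : ℤ) ^ k * u) := by congr 1; linarith
      _ = q z * ((q z ^ ((p : ℤ) ^ k)) ^ u)⁻¹ := by rw [zpow_sub, zpow_one, zpow_mul]
      _ = q z := by rw [hzk, one_zpow, inv_one, mul_one]
  -- commuting of powers of v with r
  have hcomm_vr : ∀ s : ℤ, v ^ s * r = r * v ^ s := by
    intro s
    rw [hav, hmz, ← zpow_mul, ← zpow_add, ← zpow_add, add_comm]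
  -- the set of conjugates
  have hmem : ∀ f : FreeGroup X, f * r * f⁻¹ ∈ FH := by
    intro f
    have : π (f * r * f⁻¹) = 1 := by
      rw [map_mul, map_mul, hπr, map_inv, mul_one, mul_inv_cancel]
    simp only [hFHdef, Subgroup.mem_comap, this]
    exact H.one_mem
  set emb : (FreeGroup X ⧸ M) → FH :=
    (fun cos => ⟨cos.out * r * cos.out⁻¹, hmem cos.out⟩) with hemb
  have hembinj : Function.Injective emb := by
    intro c1 c2 hc
    have h1 : c1.out * r * c1.out⁻¹ = c2.out * r * c2.out⁻¹ := congrArg Subtype.val hc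
    have h3 : c2.out⁻¹ * (c1.out * r * c1.out⁻¹) * c2.out = r := by rw [h1]; group
    have h2 : (c2.out⁻¹ * c1.out) * r = r * (c2.out⁻¹ * c1.out) := by
      calc (c2.out⁻¹ * c1.out) * r
          = (c2.out⁻¹ * (c1.out * r * c1.out⁻¹) * c2.out) * (c2.out⁻¹ * c1.out) := by group
        _ = r * (c2.out⁻¹ * c1.out) := by rw [h3]
    have hyM : c2.out⁻¹ * c1.out ∈ M := (Subgroup.zpowers_le.2 hzM) (hzcen _ h2)
    have h4 : ((c2.out : FreeGroup X ⧸ M)) = c1.out := QuotientGroup.eq.2 hyM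
    rw [QuotientGroup.out_eq', QuotientGroup.out_eq'] at h4
    exact h4.symm
  refine ⟨Set.range emb, ?_, ?_, ?_, ?_⟩
  · rintro w' ⟨cos, rfl⟩
    exact ⟨cos.out, rfl⟩
  · rw [Nat.card_range_of_injective hembinj, ← Subgroup.index_eq_card]
    exact hMidx
  · rintro w' ⟨cos, rfl⟩
    show π (cos.out * r * cos.out⁻¹) = 1
    rw [map_mul, map_mul, hπr, map_inv, mul_one, mul_inv_cancel]
  · intro f
    set cos : FreeGroup X ⧸ M := QuotientGroup.mk f with hcos
    have h1 : cos.out⁻¹ * f ∈ M := by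
      apply QuotientGroup.eq.1
      rw [QuotientGroup.out_eq']
    obtain ⟨s, hs⟩ := Subgroup.mem_zpowers_iff.1 h1
    have h2 : v ^ (-s) * (cos.out⁻¹ * f) ∈ FH := by
      apply (QuotientGroup.eq_one_iff _).1
      show q (v ^ (-s) * (cos.out⁻¹ * f)) = 1
      rw [map_mul, map_zpow]
      rw [show q (cos.out⁻¹ * f) = q v ^ s from hs.symm]
      rw [← zpow_add]
      simp
    set h := v ^ (-s) * (cos.out⁻¹ * f) with hh
    have hfeq : f = cos.out * v ^ s * h := by rw [hh]; group
    refine ⟨(cos.out * v ^ s) * h * (cos.out * v ^ s)⁻¹, hFHn.conj_mem h h2 _,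
      emb cos, ⟨cos, rfl⟩, ?_⟩
    have hkey : (v ^ s)⁻¹ * r * v ^ s = r := by
      have hc := hcomm_vr s
      calc (v ^ s)⁻¹ * r * v ^ s = (v ^ s)⁻¹ * (r * v ^ s) := by group
        _ = (v ^ s)⁻¹ * (v ^ s * r) := by rw [← hc]
        _ = r := by group
    show f * r * f⁻¹ =
      ((cos.out * v ^ s) * h * (cos.out * v ^ s)⁻¹) * (cos.out * r * cos.out⁻¹) *
        ((cos.out * v ^ s) * h * (cos.out * v ^ s)⁻¹)⁻¹
    calc f * r * f⁻¹
        = cos.out * v ^ s * (h * ((v ^ s)⁻¹ * r * v ^ s) * h⁻¹) * (v ^ s)⁻¹ * cos.out⁻¹ := by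
          rw [hkey, hfeq]; group
      _ = ((cos.out * v ^ s) * h * (cos.out * v ^ s)⁻¹) * (cos.out * r * cos.out⁻¹) *
          ((cos.out * v ^ s) * h * (cos.out * v ^ s)⁻¹)⁻¹ := by group

end test


/-- Lemma (Schlage-Puchta/Osin): let `(X,R)` be a presentation of `G` with `X` finite and
all relators non-trivial, `π : F(X) → G` the projection, `H ⊴ G` of `p`-power index and
`F_H = π⁻¹(H)`.  Then `H = F_H/⟨⟨R_H⟩⟩`, where `R_H = ⋃_{r ∈ R} S_r` and each `S_r` is a
set of `F`-conjugates of `r` of cardinality `[G:H]/p^{e_p(r,F) - e_p(r,F_H)}`. -/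
theorem stmt9 (p : ℕ) (hp : p.Prime) (X : Type) [Finite X]
    (R : Set (FreeGroup X)) (hR : ∀ r ∈ R, r ≠ 1)
    (G : Type) [Group G] (π : FreeGroup X →* G) (hsurj : Function.Surjective π)
    (hker : MonoidHom.ker π = Subgroup.normalClosure R)
    (H : Subgroup G) (hHnorm : H.Normal) (k : ℕ) (hHidx : H.index = p ^ k) :
    ∃ S : R → Set (Subgroup.comap π H),
      (∀ r : R, ∀ w ∈ S r, ∃ f : FreeGroup X,
        (w : FreeGroup X) = f * (r : FreeGroup X) * f⁻¹) ∧
      (∀ r : R, Nat.card (S r) *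
          p ^ (epIn p ⊤ (r : FreeGroup X) - epIn p (Subgroup.comap π H) (r : FreeGroup X))
          = H.index) ∧
      MonoidHom.ker
        ((π.domRestrict (Subgroup.comap π H)).codRestrict H (fun x => x.2)) =
        Subgroup.normalClosure (⋃ r : R, S r) := by
  set FH := Subgroup.comap π H with hFHdef
  have hRker : ∀ r : R, π (r : FreeGroup X) = 1 := by
    intro r
    have : (r : FreeGroup X) ∈ MonoidHom.ker π := by
      rw [hker]; exact Subgroup.subset_normalClosure r.2
    exact MonoidHom.mem_ker.1 this
  have hFHidx : FH.index = p ^ k := by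
    rw [hFHdef, Subgroup.index_comap_of_surjective _ hsurj, hHidx]
  have key := fun r : R =>
    aux_key p hp π H hHnorm k hFHidx (r : FreeGroup X) (hR r r.2) (hRker r)
  choose S h1 h2 h3 h4 using key
  refine ⟨S, fun r => h1 r, fun r => by rw [hHidx]; exact h2 r, ?_⟩
  have hkermem : ∀ x : FH,
      x ∈ MonoidHom.ker ((π.domRestrict FH).codRestrict H (fun x => x.2)) ↔ π (x : FreeGroup X) = 1 := by
    intro x
    rw [MonoidHom.mem_ker]
    constructor
    · intro hx
      have := congrArg (Subtype.val) hx
      exact this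
    · intro hx
      apply Subtype.ext
      exact hx
  apply le_antisymm
  · -- ker ≤ normalClosure
    intro x hx
    have hxval : (x : FreeGroup X) ∈ Subgroup.normalClosure R := by
      rw [← hker]; exact MonoidHom.mem_ker.2 ((hkermem x).1 hx)
    have hle : Subgroup.normalClosure R ≤
        (Subgroup.normalClosure (⋃ r : R, (S r : Set FH))).map FH.subtype := by
      show Subgroup.closure (Group.conjugatesOfSet R) ≤ _
      rw [Subgroup.closure_le]
      rintro x' hx'
      obtain ⟨rr, hrrR, hconj⟩ := Group.mem_conjugatesOfSet_iff.1 hx'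
      obtain ⟨f, hf⟩ := isConj_iff.1 hconj
      obtain ⟨g, hgFH, w, hwS, heq⟩ := h4 ⟨rr, hrrR⟩ f
      set y : FH := ⟨g, hgFH⟩ * w * ⟨g, hgFH⟩⁻¹ with hy
      have hyJ : y ∈ Subgroup.normalClosure (⋃ r : R, (S r : Set FH)) :=
        Subgroup.normalClosure_normal.conj_mem _
          (Subgroup.subset_normalClosure (Set.mem_iUnion.2 ⟨⟨rr, hrrR⟩, hwS⟩)) _
      refine ⟨y, hyJ, ?_⟩
      show (y : FreeGroup X) = x'
      rw [← hf, heq, hy]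
      rfl
    obtain ⟨y, hyJ, hyx⟩ := hle hxval
    have : y = x := Subtype.ext hyx
    rwa [this] at hyJ
  · -- normalClosure ≤ ker
    apply Subgroup.normalClosure_le_normal
    rintro w hw
    obtain ⟨r, hwr⟩ := Set.mem_iUnion.1 hw
    exact (hkermem w).2 (h3 r w hwr)
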